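/- arXiv:1307.5522 — 7 statements merged into one kernel-verified Lean document; each statement's English description precedes it below -/
import Mathlib

section
/- For every positive integer n, the general linear group GL_n(ℂ) is a Jordan group: there exists a positive integer d such that every finite subgroup K of GL_n(ℂ) contains an abelian subgroup that is normal in K and has index at most d in K. -/
/-- A group `G` is *Jordan with constant* `d` if every finite subgroup `K` of `G`
contains an abelian subgroup that is normal in `K` and has index at most `d` in `K`. -/
def IsJordanWith (G : Type*) [Group G] (d : ℕ) : Prop :=
  ∀ K : Subgroup G, Finite K →
    ∃ A : Subgroup K, A.Normal ∧ IsMulCommutative A ∧ A.index ≤ d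

/-- A group `G` is *Jordan* if some positive integer `d` witnesses the Jordan property. -/
def IsJordanGroup (G : Type*) [Group G] : Prop :=
  ∃ d : ℕ, 0 < d ∧ IsJordanWith G d

set_option maxHeartbeats 1000000

open Matrix
open scoped Matrix.Norms.L2Operator ComplexOrder MatrixOrder

/-- The square complex matrices, equipped (via the scoped instances) with the
`L²` operator norm, under which they form a C*-algebra. -/
abbrev Mat (n : ℕ) := Matrix (Fin n) (Fin n) ℂ


/-- For a root of unity `μ ≠ 1`, some power is far from 1. -/
lemma exists_power_re_neg (μ : ℂ) (m : ℕ) (hm : 0 < m) (hμm : μ ^ m = 1) (hμ : μ ≠ 1) :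
    ∃ k : ℕ, 2 < ‖μ ^ k - 1‖ ^ 2 := by
  have habs : ‖μ‖ = 1 := by
    have h1 : ‖μ‖ ^ m = 1 := by
      rw [← norm_pow, hμm, norm_one]
    have h0 : (0:ℝ) ≤ ‖μ‖ := norm_nonneg μ
    rcases lt_trichotomy (‖μ‖) 1 with h | h | h
    · have := pow_lt_one₀ h0 h hm.ne'
      simp [h1] at this
    · exact h
    · have := one_lt_pow₀ h hm.ne'
      simp [h1] at this
  -- geometric sum is zero
  have hsum : (∑ k ∈ Finset.range m, μ ^ k) = 0 := by
    have := geom_sum_mul μ m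
    rw [hμm, sub_self] at this
    rcases mul_eq_zero.mp this with h | h
    · exact h
    · exact absurd (sub_eq_zero.mp h) hμ
  -- some power has nonpositive real part? strictly negative
  have hre : ∃ k ∈ Finset.range m, (μ ^ k).re < 0 := by
    by_contra hc
    push_neg at hc
    have h0 : (0:ℝ) = ∑ k ∈ Finset.range m, (μ ^ k).re := by
      rw [← Complex.re_sum, hsum, Complex.zero_re]
    have h1 : (1:ℝ) ≤ ∑ k ∈ Finset.range m, (μ ^ k).re := by
      have := Finset.single_le_sum (f := fun k => (μ ^ k).re) (fun i _ => hc i ‹_›)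
        (Finset.mem_range.mpr hm)
      simpa using this
    linarith
  obtain ⟨k, -, hk⟩ := hre
  refine ⟨k, ?_⟩
  have habsk : ‖μ ^ k‖ = 1 := by rw [norm_pow, habs, one_pow]
  have hsq : (μ ^ k).re ^ 2 + (μ ^ k).im ^ 2 = 1 := by
    have := Complex.sq_norm (μ ^ k)
    rw [habsk] at this
    have := this.symm
    simpa [Complex.normSq_apply, sq] using this
  have hexp : ‖μ ^ k - 1‖ ^ 2 = 2 - 2 * (μ ^ k).re := by
    simp [Complex.sq_norm, Complex.normSq_apply, Complex.sub_re, Complex.sub_im]; nlinarith [hsq]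
  linarith


/-- A matrix of finite order that is not 1 has an eigenvalue different from 1. -/
lemma exists_eigen_ne_one {n : ℕ} {M : Matrix (Fin n) (Fin n) ℂ} {m : ℕ} (hm : 0 < m)
    (hMm : M ^ m = 1) (hM1 : M ≠ 1) :
    ∃ (μ : ℂ) (z : Fin n → ℂ), z ≠ 0 ∧ M *ᵥ z = μ • z ∧ μ ^ m = 1 ∧ μ ≠ 1 := by
  classical
  set T : Module.End ℂ (Fin n → ℂ) := Matrix.toLinAlgEquiv' M with hT
  have hTm : T ^ m = 1 := by
    rw [hT, ← map_pow, hMm, _root_.map_one]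
  have hT1 : T ≠ 1 := by
    intro h
    apply hM1
    apply Matrix.toLinAlgEquiv'.injective (a₁ := M) (a₂ := 1)
    rw [_root_.map_one, ← hT]
    exact h
  set S : Module.End ℂ (Fin n → ℂ) := ∑ k ∈ Finset.range m, T ^ k with hS
  set P : Module.End ℂ (Fin n → ℂ) := (m : ℂ)⁻¹ • S with hP
  have hmC : (m : ℂ) ≠ 0 := Nat.cast_ne_zero.mpr hm.ne'
  have hshift : ∑ k ∈ Finset.range m, T ^ (k + 1) = ∑ k ∈ Finset.range m, T ^ k := by
    have h1 : ∑ k ∈ Finset.range m, T ^ (k + 1) + T ^ 0 =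
        (∑ k ∈ Finset.range m, T ^ k) + T ^ m := by
      rw [← Finset.sum_range_succ', Finset.sum_range_succ]
    rw [hTm, pow_zero] at h1
    exact add_right_cancel h1
  have hTS : T * S = S := by
    rw [hS, Finset.mul_sum]
    calc ∑ k ∈ Finset.range m, T * T ^ k = ∑ k ∈ Finset.range m, T ^ (k + 1) := by
          simp [pow_succ']
      _ = ∑ k ∈ Finset.range m, T ^ k := hshift
  have hST : S * T = S := by
    rw [hS, Finset.sum_mul]
    calc ∑ k ∈ Finset.range m, T ^ k * T = ∑ k ∈ Finset.range m, T ^ (k + 1) := by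
          simp [pow_succ]
      _ = ∑ k ∈ Finset.range m, T ^ k := hshift
  have hTP : T * P = P := by rw [hP, mul_smul_comm, hTS]
  have hPT : P * T = P := by rw [hP, smul_mul_assoc, hST]
  have hPTk : ∀ k : ℕ, P * T ^ k = P := by
    intro k
    induction k with
    | zero => simp
    | succ k ih => rw [pow_succ, ← mul_assoc, ih, hPT]
  have hTkP : ∀ k : ℕ, T ^ k * P = P := by
    intro k
    induction k with
    | zero => simp
    | succ k ih => rw [pow_succ', mul_assoc, ih, hTP]
  have hPP : P * P = P := by
    have hSP : S * P = (m : ℂ) • P := by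
      rw [hS, Finset.sum_mul]
      rw [Finset.sum_congr rfl (fun k _ => hTkP k), Finset.sum_const, Finset.card_range,
        ← Nat.cast_smul_eq_nsmul ℂ]
    conv_lhs => rw [hP, smul_mul_assoc, hSP, smul_smul, inv_mul_cancel₀ hmC, one_smul]
  have hP1 : P ≠ 1 := by
    intro h
    apply hT1
    have := hTP
    rw [h, mul_one] at this
    exact this
  -- the invariant subspace
  have hsub : (1 : Module.End ℂ (Fin n → ℂ)) - P ≠ 0 := by
    intro h
    exact hP1 (sub_eq_zero.mp h).symm
  set U : Submodule ℂ (Fin n → ℂ) := LinearMap.range (1 - P) with hU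
  have hUne : U ≠ ⊥ := by
    rw [hU, ne_eq, LinearMap.range_eq_bot]
    exact hsub
  haveI : Nontrivial U := Submodule.nontrivial_iff_ne_bot.mpr hUne
  have hUinv : ∀ x ∈ U, T x ∈ U := by
    rintro x ⟨y, rfl⟩
    refine ⟨T y, ?_⟩
    have h1 : (1 - P) (T y) = T y - P (T y) := by simp [LinearMap.sub_apply]
    have h2 : T ((1 - P) y) = T y - T (P y) := by
      simp [LinearMap.sub_apply, map_sub]
    rw [h1, h2]
    congr 1
    calc P (T y) = (P * T) y := rfl
      _ = P y := by rw [hPT]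
      _ = (T * P) y := by rw [hTP]
      _ = T (P y) := rfl
  set T' := T.restrict hUinv with hT'
  obtain ⟨μ, hμ⟩ := Module.End.exists_eigenvalue T'
  obtain ⟨v, hv⟩ := hμ.exists_hasEigenvector
  have hvapp : T' v = μ • v := hv.apply_eq_smul
  set z : Fin n → ℂ := (v : Fin n → ℂ) with hz
  have hzne : z ≠ 0 := by
    rw [hz, ne_eq, Submodule.coe_eq_zero]
    exact hv.2
  have hTz : T z = μ • z := by
    have := congrArg (Subtype.val) hvapp
    rw [LinearMap.restrict_coe_apply] at this
    exact this
  have hTkz : ∀ k : ℕ, (T ^ k) z = μ ^ k • z := by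
    intro k
    induction k with
    | zero => simp
    | succ k ih =>
      rw [pow_succ', pow_succ']
      calc (T * T ^ k) z = T ((T ^ k) z) := rfl
        _ = T (μ ^ k • z) := by rw [ih]
        _ = μ ^ k • T z := by rw [LinearMap.map_smul]
        _ = μ ^ k • (μ • z) := by rw [hTz]
        _ = (μ * μ ^ k) • z := by rw [smul_smul, mul_comm]
  have hμm : μ ^ m = 1 := by
    have h1 : (T ^ m) z = z := by rw [hTm]; rfl
    rw [hTkz m] at h1
    have h2 : (μ ^ m - 1) • z = 0 := by
      rw [sub_smul, one_smul, h1, sub_self]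
    rcases smul_eq_zero.mp h2 with h | h
    · rw [sub_eq_zero] at h; exact h
    · exact absurd h hzne
  have hμ1 : μ ≠ 1 := by
    intro h
    have hTzz : T z = z := by rw [hTz, h, one_smul]
    have hTkzz : ∀ k : ℕ, (T ^ k) z = z := by
      intro k
      rw [hTkz, h, one_pow, one_smul]
    have hSz : S z = (m : ℂ) • z := by
      rw [hS]
      calc (∑ k ∈ Finset.range m, T ^ k) z = ∑ k ∈ Finset.range m, (T ^ k) z :=
            LinearMap.sum_apply _ _ _
        _ = ∑ _k ∈ Finset.range m, z := Finset.sum_congr rfl (fun k _ => hTkzz k)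
        _ = (m : ℂ) • z := by rw [Finset.sum_const, Finset.card_range, ← Nat.cast_smul_eq_nsmul ℂ]
    have hPz : P z = z := by
      rw [hP, LinearMap.smul_apply, hSz, smul_smul, inv_mul_cancel₀ hmC, one_smul]
    -- but P z = 0 since z ∈ range (1 - P)
    obtain ⟨y, hy⟩ := v.2
    have hPz0 : P z = 0 := by
      have : P ((1 - P) y) = (P - P * P) y := by
        simp [LinearMap.sub_apply, mul_sub, Module.End.mul_apply, map_sub]
      rw [hy] at this  -- careful
      rw [this, hPP, sub_self, LinearMap.zero_apply]
    rw [hPz0] at hPz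
    exact hzne hPz.symm
  refine ⟨μ, z, hzne, ?_, hμm, hμ1⟩
  rw [← hTz, hT]
  rfl

/-- A finite-order matrix that is not 1 has a power far from 1 in operator norm. -/
lemma exists_pow_norm_large {n : ℕ} {M : Matrix (Fin n) (Fin n) ℂ} {m : ℕ} (hm : 0 < m)
    (hMm : M ^ m = 1) (hM1 : M ≠ 1) : ∃ k : ℕ, 2 < ‖M ^ k - 1‖ ^ 2 := by
  obtain ⟨μ, z, hzne, hMz, hμm, hμ1⟩ := exists_eigen_ne_one hm hMm hM1
  have hMkz : ∀ k : ℕ, (M ^ k) *ᵥ z = μ ^ k • z := by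
    intro k
    induction k with
    | zero => simp
    | succ k ih =>
      rw [pow_succ', pow_succ', ← Matrix.mulVec_mulVec, ih, Matrix.mulVec_smul, hMz,
        smul_smul, mul_comm]
  obtain ⟨k, hk⟩ := exists_power_re_neg μ m hm hμm hμ1
  refine ⟨k, ?_⟩
  have hMkz := hMkz k
  set xE : EuclideanSpace ℂ (Fin n) := (WithLp.equiv 2 (Fin n → ℂ)).symm z with hxE
  have hxEne : ‖xE‖ ≠ 0 := by
    simp only [ne_eq, norm_eq_zero]
    intro h
    apply hzne
    apply (WithLp.equiv 2 (Fin n → ℂ)).symm.injective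
    rw [← hxE, h]
    simp
  have happ : Matrix.toEuclideanCLM (𝕜 := ℂ) (M ^ k - 1) xE
      = (WithLp.equiv 2 (Fin n → ℂ)).symm ((μ ^ k - 1) • z) := by
    rw [hxE]
    simp only [WithLp.equiv_symm_apply, Matrix.toEuclideanCLM_toLp]
    congr 1
    rw [Matrix.sub_mulVec, Matrix.one_mulVec, hMkz, sub_smul, one_smul]
  have hle : ‖μ ^ k - 1‖ * ‖xE‖ ≤ ‖M ^ k - 1‖ * ‖xE‖ := by
    have h1 := (Matrix.toEuclideanCLM (𝕜 := ℂ) (M ^ k - 1)).le_opNorm xE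
    rw [happ] at h1
    rw [Matrix.cstar_norm_def]
    calc ‖μ ^ k - 1‖ * ‖xE‖
        = ‖(WithLp.equiv 2 (Fin n → ℂ)).symm ((μ ^ k - 1) • z)‖ := by
          have : (WithLp.equiv 2 (Fin n → ℂ)).symm ((μ ^ k - 1) • z)
              = (μ ^ k - 1) • xE := by
            rw [hxE]
            rfl
          rw [this, norm_smul]
      _ ≤ _ := h1
  have hle2 : ‖μ ^ k - 1‖ ≤ ‖M ^ k - 1‖ :=
    le_of_mul_le_mul_right (by simpa using hle) (lt_of_le_of_ne (norm_nonneg xE) (Ne.symm hxEne))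
  nlinarith [norm_nonneg (μ ^ k - 1)]


section

variable {n : ℕ}

lemma inv_coe_unitary {w : GL (Fin n) ℂ} (hw : (w : Mat n) ∈ unitary (Mat n)) :
    ((w⁻¹ : GL (Fin n) ℂ) : Mat n) ∈ unitary (Mat n) := by
  have h1 : ((w⁻¹ : GL (Fin n) ℂ) : Mat n) = star (w : Mat n) := by
    have h2 : ((w⁻¹ : GL (Fin n) ℂ) : Mat n) * (w : Mat n) = 1 := by
      rw [← Units.val_mul, inv_mul_cancel, Units.val_one]
    calc ((w⁻¹ : GL (Fin n) ℂ) : Mat n)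
        = ((w⁻¹ : GL (Fin n) ℂ) : Mat n) * ((w : Mat n) * star (w : Mat n)) := by
          rw [Unitary.mul_star_self_of_mem hw, mul_one]
      _ = (((w⁻¹ : GL (Fin n) ℂ) : Mat n) * (w : Mat n)) * star (w : Mat n) := by
          rw [mul_assoc]
      _ = star (w : Mat n) := by rw [h2, one_mul]
  rw [h1]
  exact Unitary.star_mem hw

lemma comm_est {u v : GL (Fin n) ℂ}
    (hu : (u : Mat n) ∈ unitary (Mat n)) (hv : (v : Mat n) ∈ unitary (Mat n)) :
    ‖((u * v * u⁻¹ * v⁻¹ : GL (Fin n) ℂ) : Mat n) - 1‖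
      ≤ 2 * ‖(u : Mat n) - 1‖ * ‖(v : Mat n) - 1‖ := by
  set a := (u : Mat n)
  set b := (v : Mat n)
  have hvu : ((v * u : GL (Fin n) ℂ) : Mat n) ∈ unitary (Mat n) := by
    rw [Units.val_mul]; exact mul_mem hv hu
  have hgrp : (u * v * u⁻¹ * v⁻¹) * (v * u) = u * v := by group
  have key : (((u * v * u⁻¹ * v⁻¹ : GL (Fin n) ℂ) : Mat n) - 1) * ((v * u : GL (Fin n) ℂ) : Mat n)
      = a * b - b * a := by
    rw [sub_mul, one_mul, ← Units.val_mul, hgrp, Units.val_mul, Units.val_mul]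
  have hring : a * b - b * a = (a - 1) * (b - 1) - (b - 1) * (a - 1) := by noncomm_ring
  calc ‖((u * v * u⁻¹ * v⁻¹ : GL (Fin n) ℂ) : Mat n) - 1‖
      = ‖(((u * v * u⁻¹ * v⁻¹ : GL (Fin n) ℂ) : Mat n) - 1) * ((v * u : GL (Fin n) ℂ) : Mat n)‖ :=
        (CStarRing.norm_mul_mem_unitary _ hvu).symm
    _ = ‖a * b - b * a‖ := by rw [key]
    _ = ‖(a - 1) * (b - 1) - (b - 1) * (a - 1)‖ := by rw [hring]
    _ ≤ ‖(a - 1) * (b - 1)‖ + ‖(b - 1) * (a - 1)‖ := norm_sub_le _ _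
    _ ≤ ‖a - 1‖ * ‖b - 1‖ + ‖b - 1‖ * ‖a - 1‖ :=
        add_le_add (norm_mul_le _ _) (norm_mul_le _ _)
    _ = 2 * ‖a - 1‖ * ‖b - 1‖ := by ring

lemma commute_of_close (K : Subgroup (GL (Fin n) ℂ)) [Finite K]
    (hKu : ∀ g : K, ((g : GL (Fin n) ℂ) : Mat n) ∈ unitary (Mat n))
    {u v : GL (Fin n) ℂ} (hu : u ∈ K) (hv : v ∈ K)
    (hun : ‖(u : Mat n) - 1‖ ≤ 1/4) (hvn : ‖(v : Mat n) - 1‖ ≤ 1/4) :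
    u * v = v * u := by
  by_contra hne
  set T : Set ↥K := {w | ¬ (u * (w : GL (Fin n) ℂ) = (w : GL (Fin n) ℂ) * u)} with hT
  have hvT : (⟨v, hv⟩ : ↥K) ∈ T := hne
  obtain ⟨w, hwT, hwmin⟩ :=
    Set.exists_min_image T (fun w : ↥K => ‖((w : GL (Fin n) ℂ) : Mat n) - 1‖)
      (Set.toFinite T) ⟨_, hvT⟩
  have hwn : ‖((w : GL (Fin n) ℂ) : Mat n) - 1‖ ≤ 1/4 := le_trans (hwmin _ hvT) hvn
  set c : GL (Fin n) ℂ := u * (w : GL (Fin n) ℂ) * u⁻¹ * (w : GL (Fin n) ℂ)⁻¹ with hc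
  have hcK : c ∈ K := mul_mem (mul_mem (mul_mem hu w.2) (inv_mem hu)) (inv_mem w.2)
  have hc1 : c ≠ 1 := by
    intro h
    apply hwT
    have h2 : (u * (w : GL (Fin n) ℂ)) * ((w : GL (Fin n) ℂ) * u)⁻¹ = 1 := by
      rw [← h, hc]; group
    exact mul_inv_eq_one.mp h2
  have hwne1 : ((w : GL (Fin n) ℂ) : Mat n) ≠ 1 := by
    intro h
    apply hwT
    have : (w : GL (Fin n) ℂ) = 1 := Units.ext (by rw [h, Units.val_one])
    rw [this, mul_one, one_mul]
  have hwpos : 0 < ‖((w : GL (Fin n) ℂ) : Mat n) - 1‖ := by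
    rw [norm_pos_iff]
    exact sub_ne_zero.mpr hwne1
  have hcnorm := comm_est (hKu ⟨u, hu⟩) (hKu w)
  have hclt : ‖(c : Mat n) - 1‖ < ‖((w : GL (Fin n) ℂ) : Mat n) - 1‖ := by
    refine lt_of_le_of_lt hcnorm ?_
    nlinarith [norm_nonneg ((u : Mat n) - 1)]
  have hcu : u * c = c * u := by
    by_contra hcu
    exact absurd (hwmin ⟨c, hcK⟩ hcu) (not_le.mpr hclt)
  -- c has finite order
  have hm : 0 < Nat.card ↥K := Nat.card_pos
  have hcm : c ^ Nat.card ↥K = 1 := by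
    have h1 : ((⟨c, hcK⟩ : ↥K) : GL (Fin n) ℂ) ^ Nat.card ↥K = 1 := by
      rw [← SubgroupClass.coe_pow, pow_card_eq_one', OneMemClass.coe_one]
    exact h1
  have hMm : ((c : Mat n)) ^ Nat.card ↥K = 1 := by
    rw [← Units.val_pow_eq_pow_val, hcm, Units.val_one]
  have hM1 : (c : Mat n) ≠ 1 := fun h => hc1 (Units.ext (by rw [h, Units.val_one]))
  obtain ⟨k, hk⟩ := exists_pow_norm_large hm hMm hM1
  -- upper bound for all powers of c
  have hconj : ∀ k : ℕ, u ^ k * (w : GL (Fin n) ℂ) * (u ^ k)⁻¹ = c ^ k * (w : GL (Fin n) ℂ) := by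
    intro k
    induction k with
    | zero => simp
    | succ k ih =>
      have hcomm : u * c ^ k = c ^ k * u := (show Commute u c from hcu).pow_right k
      have hcw : u * (w : GL (Fin n) ℂ) * u⁻¹ = c * (w : GL (Fin n) ℂ) := by
        rw [hc]; group
      calc u ^ (k+1) * (w : GL (Fin n) ℂ) * (u ^ (k+1))⁻¹
          = u * (u ^ k * (w : GL (Fin n) ℂ) * (u ^ k)⁻¹) * u⁻¹ := by
            rw [pow_succ']; group
        _ = u * (c ^ k * (w : GL (Fin n) ℂ)) * u⁻¹ := by rw [ih]
        _ = (u * c ^ k) * ((w : GL (Fin n) ℂ) * u⁻¹) := by group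
        _ = c ^ k * (u * (w : GL (Fin n) ℂ) * u⁻¹) := by rw [hcomm]; group
        _ = c ^ k * (c * (w : GL (Fin n) ℂ)) := by rw [hcw]
        _ = c ^ (k+1) * (w : GL (Fin n) ℂ) := by rw [pow_succ]; group
  have hupper : ‖((c : Mat n)) ^ k - 1‖ ≤ 2 * ‖((w : GL (Fin n) ℂ) : Mat n) - 1‖ := by
    have hwu := hKu w
    have hukK : u ^ k ∈ K := pow_mem hu k
    have huku := hKu ⟨u ^ k, hukK⟩
    have hukinv := inv_coe_unitary (w := u ^ k) huku
    have hexp : ((c ^ k * (w : GL (Fin n) ℂ) : GL (Fin n) ℂ) : Mat n) - ((w : GL (Fin n) ℂ) : Mat n)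
        = ((u ^ k : GL (Fin n) ℂ) : Mat n) * (((w : GL (Fin n) ℂ) : Mat n) - 1)
            * (((u ^ k)⁻¹ : GL (Fin n) ℂ) : Mat n)
          + (1 - ((w : GL (Fin n) ℂ) : Mat n)) := by
      rw [← hconj k]
      have hinv : ((u ^ k : GL (Fin n) ℂ) : Mat n) * (((u ^ k)⁻¹ : GL (Fin n) ℂ) : Mat n) = 1 := by
        rw [← Units.val_mul, mul_inv_cancel, Units.val_one]
      simp only [Units.val_mul, mul_sub, sub_mul, one_mul, mul_one, hinv]
      abel
    calc ‖((c : Mat n)) ^ k - 1‖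
        = ‖(((c : Mat n)) ^ k - 1) * ((w : GL (Fin n) ℂ) : Mat n)‖ :=
          (CStarRing.norm_mul_mem_unitary _ hwu).symm
      _ = ‖((c ^ k * (w : GL (Fin n) ℂ) : GL (Fin n) ℂ) : Mat n) - ((w : GL (Fin n) ℂ) : Mat n)‖ := by
          rw [sub_mul, one_mul, Units.val_mul (c ^ k), Units.val_pow_eq_pow_val]
      _ ≤ ‖((u ^ k : GL (Fin n) ℂ) : Mat n) * (((w : GL (Fin n) ℂ) : Mat n) - 1)
            * (((u ^ k)⁻¹ : GL (Fin n) ℂ) : Mat n)‖ + ‖1 - ((w : GL (Fin n) ℂ) : Mat n)‖ := by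
          rw [hexp]; exact norm_add_le _ _
      _ = ‖((w : GL (Fin n) ℂ) : Mat n) - 1‖ + ‖((w : GL (Fin n) ℂ) : Mat n) - 1‖ := by
          rw [CStarRing.norm_mul_mem_unitary _ hukinv, CStarRing.norm_mem_unitary_mul _ huku,
            norm_sub_rev]
      _ = 2 * ‖((w : GL (Fin n) ℂ) : Mat n) - 1‖ := by ring
  nlinarith [norm_nonneg (((c : Mat n)) ^ k - 1)]

lemma norm_conj_sub_one {g x : GL (Fin n) ℂ} (hg : (g : Mat n) ∈ unitary (Mat n)) :
    ‖((g * x * g⁻¹ : GL (Fin n) ℂ) : Mat n) - 1‖ = ‖(x : Mat n) - 1‖ := by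
  have hinv : ((g : Mat n)) * ((g⁻¹ : GL (Fin n) ℂ) : Mat n) = 1 := by
    rw [← Units.val_mul, mul_inv_cancel, Units.val_one]
  have hexp : ((g * x * g⁻¹ : GL (Fin n) ℂ) : Mat n) - 1
      = (g : Mat n) * ((x : Mat n) - 1) * ((g⁻¹ : GL (Fin n) ℂ) : Mat n) := by
    simp only [Units.val_mul, mul_sub, sub_mul, one_mul, mul_one, hinv]
  rw [hexp, CStarRing.norm_mul_mem_unitary _ (inv_coe_unitary hg),
    CStarRing.norm_mem_unitary_mul _ hg]

end

lemma unitary_case (n : ℕ) (hn : 0 < n) :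
    ∃ d : ℕ, 0 < d ∧ ∀ K : Subgroup (GL (Fin n) ℂ), Finite K →
      (∀ g : K, ((g : GL (Fin n) ℂ) : Mat n) ∈ unitary (Mat n)) →
      ∃ A : Subgroup ↥K, A.Normal ∧ IsMulCommutative A ∧ A.index ≤ d := by
  haveI : Nonempty (Fin n) := ⟨⟨0, hn⟩⟩
  -- a finite 1/8-net of the unit ball
  have hcpt : IsCompact (Metric.closedBall (0 : Mat n) 1) := isCompact_closedBall _ _
  obtain ⟨t, htfin, hcov⟩ := Metric.totallyBounded_iff.mp hcpt.totallyBounded (1/8) (by norm_num)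
  classical
  refine ⟨htfin.toFinset.card + 1, Nat.succ_pos _, ?_⟩
  intro K hKfin hKu
  set S : Set ↥K := {g : ↥K | ‖((g : GL (Fin n) ℂ) : Mat n) - 1‖ ≤ 1/4} with hS
  set A : Subgroup ↥K := Subgroup.closure S with hA
  have hSA : S ⊆ A := Subgroup.subset_closure
  -- commutativity
  have hcomm : ∀ x ∈ A, ∀ y ∈ A, x * y = y * x := by
    intro x hx y hy
    rw [hA] at hx hy
    refine Subgroup.closure_induction₂
      (p := fun a b _ _ => Commute a b)
      (fun a b ha hb => ?_)
      (fun a _ => Commute.one_left a)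
      (fun a _ => Commute.one_right a)
      (fun a b cc _ _ _ h1 h2 => h1.mul_left h2)
      (fun a b cc _ _ _ h1 h2 => h1.mul_right h2)
      (fun a b _ _ h => h.inv_left)
      (fun a b _ _ h => h.inv_right) hx hy
    -- generators commute
    have := commute_of_close K hKu a.2 b.2 ha hb
    exact Subtype.ext this
  have hAcomm : IsMulCommutative A :=
    ⟨⟨fun a b => Subtype.ext (hcomm a.1 a.2 b.1 b.2)⟩⟩
  -- normality
  have hnorm : A.Normal := by
    constructor
    intro a ha g
    have hmap : (MulAut.conj g).toMonoidHom '' S ⊆ S := by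
      rintro _ ⟨s, hs, rfl⟩
      have hval : ((((MulAut.conj g).toMonoidHom s : ↥K)) : GL (Fin n) ℂ)
          = (g : GL (Fin n) ℂ) * (s : GL (Fin n) ℂ) * ((g : GL (Fin n) ℂ))⁻¹ := rfl
      have hn2 : ‖((((MulAut.conj g).toMonoidHom s : ↥K) : GL (Fin n) ℂ) : Mat n) - 1‖ ≤ 1/4 := by
        rw [hval, norm_conj_sub_one (hKu g)]
        exact hs
      exact hn2
    have hle : A.map (MulAut.conj g).toMonoidHom ≤ A := by
      rw [hA, MonoidHom.map_closure]
      exact Subgroup.closure_le A |>.mpr (le_trans hmap hSA)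
    exact hle ⟨a, ha, rfl⟩
  -- index bound
  have hball : ∀ g : ↥K, ((g : GL (Fin n) ℂ) : Mat n) ∈ Metric.closedBall (0 : Mat n) 1 := by
    intro g
    rw [Metric.mem_closedBall, dist_zero_right]
    rw [CStarRing.norm_of_mem_unitary (hKu g)]
  have hnear : ∀ q : ↥K ⧸ A, ∃ y ∈ t,
      ((((Quotient.out q) : ↥K) : GL (Fin n) ℂ) : Mat n) ∈ Metric.ball y (1/8) := by
    intro q
    have := hcov (hball (Quotient.out q))
    simpa using this
  choose y hyt hyd using hnear
  have hinj : Function.Injective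
      (fun q : ↥K ⧸ A => (⟨y q, htfin.mem_toFinset.mpr (hyt q)⟩ : {z // z ∈ htfin.toFinset})) := by
    intro q1 q2 h
    have hy12 : y q1 = y q2 := congrArg Subtype.val h
    set g1 : ↥K := Quotient.out q1
    set g2 : ↥K := Quotient.out q2
    have hd : dist (((g1 : GL (Fin n) ℂ)) : Mat n) (((g2 : GL (Fin n) ℂ)) : Mat n) < 1/4 := by
      have h1 := hyd q1
      have h2 := hyd q2
      rw [Metric.mem_ball] at h1 h2
      calc dist (((g1 : GL (Fin n) ℂ)) : Mat n) (((g2 : GL (Fin n) ℂ)) : Mat n)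
          ≤ dist (((g1 : GL (Fin n) ℂ)) : Mat n) (y q1)
            + dist (y q2) (((g2 : GL (Fin n) ℂ)) : Mat n) := by
            rw [hy12]; exact dist_triangle _ _ _
        _ < 1/8 + 1/8 := by
            rw [dist_comm (y q2)]
            exact add_lt_add h1 h2
        _ = 1/4 := by norm_num
    have hmem : g1⁻¹ * g2 ∈ A := by
      apply hSA
      show ‖(((g1⁻¹ * g2 : ↥K) : GL (Fin n) ℂ) : Mat n) - 1‖ ≤ 1/4
      have hinv1 : (((g1⁻¹ : ↥K) : GL (Fin n) ℂ) : Mat n) * ((g1 : GL (Fin n) ℂ) : Mat n) = 1 := by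
        have h9 : ((g1⁻¹ : ↥K) : GL (Fin n) ℂ) = ((g1 : GL (Fin n) ℂ))⁻¹ := rfl
        rw [h9, ← Units.val_mul, inv_mul_cancel, Units.val_one]
      have hexp : (((g1⁻¹ * g2 : ↥K) : GL (Fin n) ℂ) : Mat n) - 1
          = (((g1⁻¹ : ↥K) : GL (Fin n) ℂ) : Mat n)
            * (((g2 : GL (Fin n) ℂ) : Mat n) - ((g1 : GL (Fin n) ℂ) : Mat n)) := by
        rw [mul_sub, hinv1]
        congr 1
      rw [hexp]
      have hu1 : (((g1⁻¹ : ↥K) : GL (Fin n) ℂ) : Mat n) ∈ unitary (Mat n) := by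
        have : ((g1⁻¹ : ↥K) : GL (Fin n) ℂ) = ((g1 : GL (Fin n) ℂ))⁻¹ := rfl
        rw [this]
        exact inv_coe_unitary (hKu g1)
      rw [CStarRing.norm_mem_unitary_mul _ hu1, ← dist_eq_norm]
      rw [dist_comm]
      exact le_of_lt hd
    calc q1 = QuotientGroup.mk g1 := (QuotientGroup.out_eq' q1).symm
      _ = QuotientGroup.mk g2 := QuotientGroup.eq.mpr hmem
      _ = q2 := QuotientGroup.out_eq' q2
  refine ⟨A, hnorm, hAcomm, ?_⟩
  rw [Subgroup.index_eq_card]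
  calc Nat.card (↥K ⧸ A) ≤ Nat.card {z // z ∈ htfin.toFinset} :=
        Nat.card_le_card_of_injective _ hinj
    _ = htfin.toFinset.card := by exact Nat.card_eq_finsetCard _
    _ ≤ htfin.toFinset.card + 1 := Nat.le_succ _


lemma exists_conj_unitary (n : ℕ) (K : Subgroup (GL (Fin n) ℂ)) [Finite K] :
    ∃ Q : GL (Fin n) ℂ, ∀ g : K,
      ((Q * (g : GL (Fin n) ℂ) * Q⁻¹ : GL (Fin n) ℂ) : Mat n) ∈ unitary (Mat n) := by
  classical
  haveI : Fintype ↥K := Fintype.ofFinite ↥K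
  set A : ↥K → Mat n := fun g => ((g : GL (Fin n) ℂ) : Mat n) with hA
  have hAmul : ∀ g h : ↥K, A (g * h) = A g * A h := by
    intro g h
    rw [hA]
    norm_cast
  have hA1 : A 1 = 1 := rfl
  set P : Mat n := ∑ g : ↥K, (A g)ᴴ * A g with hP
  -- positivity
  have hPD : P.PosDef := by
    refine Matrix.PosDef.of_dotProduct_mulVec_pos ?_ ?_
    · show Pᴴ = P
      rw [hP, Matrix.conjTranspose_sum]
      refine Finset.sum_congr rfl fun g _ => ?_
      exact Matrix.isHermitian_conjTranspose_mul_self _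
    · intro x hx
      have hdot : dotProduct (star x) (P *ᵥ x)
          = ∑ g : ↥K, dotProduct (star x) (((A g)ᴴ * A g) *ᵥ x) := by
        rw [hP]
        induction (Finset.univ : Finset ↥K) using Finset.induction with
        | empty => simp [Matrix.zero_mulVec]
        | @insert a s hnotmem ih =>
          rw [Finset.sum_insert hnotmem, Finset.sum_insert hnotmem, Matrix.add_mulVec,
            dotProduct_add, ih]
      rw [hdot]
      apply Finset.sum_pos'
      · intro g _
        exact (Matrix.posSemidef_conjTranspose_mul_self (A g)).dotProduct_mulVec_nonneg x
      · refine ⟨1, Finset.mem_univ _, ?_⟩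
        rw [hA1]
        simpa only [Matrix.conjTranspose_one, Matrix.one_mul, Matrix.one_mulVec]
          using Matrix.dotProduct_star_self_pos_iff.mpr hx
  -- invariance
  have hinvariance : ∀ h : ↥K, (A h)ᴴ * P * A h = P := by
    intro h
    rw [hP, Finset.mul_sum, Finset.sum_mul]
    refine Fintype.sum_equiv (Equiv.mulRight h) _ _ ?_
    intro g
    simp only [Equiv.coe_mulRight, hAmul, Matrix.conjTranspose_mul]
    noncomm_ring
  -- square root
  set Q : Mat n := CFC.sqrt P with hQ
  have hQ2 : Q * Q = P := CFC.sqrt_mul_sqrt_self P hPD.posSemidef.nonneg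
  have hQH : Qᴴ = Q := (CFC.sqrt_nonneg P).posSemidef.isHermitian
  have hQunit : IsUnit Q := by
    rw [Matrix.isUnit_iff_isUnit_det, isUnit_iff_ne_zero]
    intro h
    have hdet : det P ≠ 0 := ne_of_gt hPD.det_pos
    rw [← hQ2, Matrix.det_mul, h, mul_zero] at hdet
    exact hdet rfl
  set Qu : GL (Fin n) ℂ := hQunit.unit with hQu
  have hQuval : ((Qu : GL (Fin n) ℂ) : Mat n) = Q := hQunit.unit_spec
  set x : Mat n := ((Qu⁻¹ : GL (Fin n) ℂ) : Mat n) with hxdef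
  have hQx : Q * x = 1 := by
    rw [← hQuval, hxdef, ← Units.val_mul, mul_inv_cancel, Units.val_one]
  have hxQ : x * Q = 1 := by
    rw [← hQuval, hxdef, ← Units.val_mul, inv_mul_cancel, Units.val_one]
  have hxH : xᴴ = x := by
    calc xᴴ = xᴴ * (Q * x) := by rw [hQx, mul_one]
      _ = (Q * x)ᴴ * x := by
          rw [Matrix.conjTranspose_mul, hQH, mul_assoc]
      _ = x := by rw [hQx, Matrix.conjTranspose_one, one_mul]
  refine ⟨Qu, ?_⟩
  intro g
  set u : Mat n := ((Qu * (g : GL (Fin n) ℂ) * Qu⁻¹ : GL (Fin n) ℂ) : Mat n) with hu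
  have huval : u = Q * A g * x := by
    rw [hu, Units.val_mul, Units.val_mul, hQuval]
  have hstar : star u * u = 1 := by
    have : star u = xᴴ * (A g)ᴴ * Qᴴ := by
      rw [huval]
      simp only [star_eq_conjTranspose, Matrix.conjTranspose_mul]
      noncomm_ring
    rw [this, hxH, hQH, huval]
    calc x * (A g)ᴴ * Q * (Q * A g * x)
        = x * ((A g)ᴴ * (Q * Q) * A g) * x := by noncomm_ring
      _ = x * P * x := by rw [hQ2, hinvariance g]
      _ = x * (Q * Q) * x := by rw [hQ2]
      _ = (x * Q) * (Q * x) := by noncomm_ring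
      _ = 1 := by rw [hQx, hxQ, one_mul]
  refine Unitary.mem_iff.mpr ⟨hstar, ?_⟩
  -- u is invertible, so the left inverse is also a right inverse
  set yinv : Mat n := ((((Qu * (g : GL (Fin n) ℂ) * Qu⁻¹ : GL (Fin n) ℂ))⁻¹ : GL (Fin n) ℂ) : Mat n)
    with hyinv
  have h2 : u * yinv = 1 := by
    rw [hu, hyinv, ← Units.val_mul, mul_inv_cancel, Units.val_one]
  have huunit : star u = yinv := by
    calc star u = star u * (u * yinv) := by rw [h2, mul_one]
      _ = (star u * u) * yinv := by rw [mul_assoc]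
      _ = yinv := by rw [hstar, one_mul]
  rw [huunit, hyinv, hu, ← Units.val_mul, mul_inv_cancel, Units.val_one]

open Matrix in
/-- Jordan's theorem: for every positive integer `n`, the group `GL n ℂ` is Jordan. -/
theorem GL_isJordan (n : ℕ) (hn : 0 < n) : IsJordanGroup (GL (Fin n) ℂ) := by
  obtain ⟨d, hd, hcase⟩ := unitary_case n hn
  refine ⟨d, hd, ?_⟩
  intro K hKfin
  haveI : Finite ↥K := hKfin
  obtain ⟨Q, hQ⟩ := exists_conj_unitary n K
  set ψ : GL (Fin n) ℂ ≃* GL (Fin n) ℂ := MulAut.conj Q with hψ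
  set K' : Subgroup (GL (Fin n) ℂ) := K.map ψ.toMonoidHom with hK'
  have hinj : Function.Injective ψ.toMonoidHom := ψ.injective
  set e : ↥K ≃* ↥K' := Subgroup.equivMapOfInjective K ψ.toMonoidHom hinj with he
  haveI : Finite ↥K' := Finite.of_equiv ↥K e.toEquiv
  have hK'u : ∀ g : ↥K', ((g : GL (Fin n) ℂ) : Mat n) ∈ unitary (Mat n) := by
    rintro ⟨g, hg⟩
    rw [hK'] at hg
    obtain ⟨x, hx, rfl⟩ := hg
    have hform : ψ.toMonoidHom x = Q * x * Q⁻¹ := rfl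
    show ((ψ.toMonoidHom x : GL (Fin n) ℂ) : Mat n) ∈ unitary (Mat n)
    rw [hform]
    exact hQ ⟨x, hx⟩
  obtain ⟨A', hA'norm, hA'comm, hA'idx⟩ := hcase K' inferInstance hK'u
  set A : Subgroup ↥K := A'.comap e.toMonoidHom with hAdef
  refine ⟨A, hA'norm.comap e.toMonoidHom, ?_, ?_⟩
  · constructor
    constructor
    intro a b
    apply Subtype.ext
    apply Subtype.ext
    have h1 : (⟨e a.1, a.2⟩ : ↥A') * ⟨e b.1, b.2⟩ = ⟨e b.1, b.2⟩ * ⟨e a.1, a.2⟩ :=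
      hA'comm.is_comm.comm _ _
    have h2 : (e a.1 : ↥K') * e b.1 = e b.1 * e a.1 := congrArg Subtype.val h1
    rw [← _root_.map_mul, ← _root_.map_mul] at h2
    have h3 := e.injective h2
    exact congrArg Subtype.val h3
  · have hsurj : Function.Surjective (e.toMonoidHom : ↥K →* ↥K') := e.surjective
    rw [hAdef, Subgroup.index_comap_of_surjective _ hsurj]
    exact hA'idx
end

section
/- Let H be a finite normal subgroup of a group G. If G is Jordan with a witness constant d (every finite subgroup K of G contains an abelian normal subgroup of K of index at most d), then the quotient group G/H is Jordan with the same witness constant d; in particular J_{G/H} ≤ J_G. -/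
/-- If `H` is a finite normal subgroup of `G` and `G` is Jordan with witness `d`,
then `G ⧸ H` is Jordan with the same witness `d`. -/
theorem quotient_isJordanWith_of_finite_normal {G : Type*} [Group G] (H : Subgroup G)
    [H.Normal] [Finite H] (d : ℕ) (hG : IsJordanWith G d) : IsJordanWith (G ⧸ H) d := by
  intro K hK
  set π : G →* G ⧸ H := QuotientGroup.mk' H with hπ
  set K' : Subgroup G := K.comap π with hK'
  have hHK' : H ≤ K' := by
    intro h hh
    simp only [hK', Subgroup.mem_comap, hπ]
    have : π h = 1 := (QuotientGroup.eq_one_iff h).2 hh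
    rw [this]; exact K.one_mem
  -- restriction hom from K' to K
  let f : K' →* K := ((π.comp K'.subtype)).codRestrict K (fun x => x.2)
  have hfval : ∀ x : K', (f x : G ⧸ H) = π x := fun x => rfl
  have hfsurj : Function.Surjective f := by
    rintro ⟨y, hy⟩
    obtain ⟨g, rfl⟩ := QuotientGroup.mk'_surjective H y
    exact ⟨⟨g, hy⟩, rfl⟩
  have hker : f.ker = H.subgroupOf K' := by
    ext x
    simp only [MonoidHom.mem_ker, Subgroup.mem_subgroupOf]
    constructor
    · intro hx
      have : π x = 1 := by rw [← hfval x, hx]; rfl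
      exact (QuotientGroup.eq_one_iff (x : G)).1 this
    · intro hx
      have : π x = 1 := (QuotientGroup.eq_one_iff (x : G)).2 hx
      exact Subtype.ext (by rw [hfval x, this]; rfl)
  -- K' is finite
  have hNfin : Finite (H.subgroupOf K') := Finite.of_equiv _ (Subgroup.subgroupOfEquivOfLe hHK').symm.toEquiv
  have hQfin : Finite (K' ⧸ H.subgroupOf K') := by
    rw [← hker]
    exact Finite.of_equiv _ (QuotientGroup.quotientKerEquivOfSurjective f hfsurj).symm.toEquiv
  have hK'fin : Finite K' :=
    Finite.of_equiv _ (Subgroup.groupEquivQuotientProdSubgroup (s := H.subgroupOf K')).symm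
  obtain ⟨A, hAn, hAc, hAi⟩ := hG K' hK'fin
  refine ⟨A.map f, hAn.map f hfsurj, inferInstance, ?_⟩
  have hdvd : (A.map f).index ∣ A.index := A.index_map_dvd hfsurj
  have hpos : 0 < A.index := Nat.pos_of_ne_zero (Subgroup.index_ne_zero_of_finite)
  exact le_trans (Nat.le_of_dvd hpos hdvd) hAi
end

section
/- Let G₁ and G₂ be groups. The direct product G₁ × G₂ is Jordan if and only if both G₁ and G₂ are Jordan. Moreover, in this case J_{G₁} ≤ J_{G₁ × G₂}, J_{G₂} ≤ J_{G₁ × G₂}, and J_{G₁ × G₂} ≤ J_{G₁} · J_{G₂}; concretely, if d₁ witnesses the Jordan property for G₁ and d₂ witnesses it for G₂, then d₁·d₂ witnesses it for G₁ × G₂. -/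
private lemma finite_map {G H : Type*} [Group G] [Group H] (f : G →* H)
    (K : Subgroup G) [Finite K] : Finite (K.map f) := by
  have : ((K : Set G).image f).Finite := (K : Set G).toFinite.image f
  exact this

private lemma isJordanWith_of_injective {G H : Type*} [Group G] [Group H] {f : G →* H}
    (hf : Function.Injective f) {d : ℕ} (h : IsJordanWith H d) : IsJordanWith G d := by
  intro K hK
  have := finite_map f K
  obtain ⟨A, hN, hC, hI⟩ := h (K.map f) (finite_map f K)
  let e : K ≃* K.map f := Subgroup.equivMapOfInjective K f hf
  refine ⟨A.comap e.toMonoidHom, hN.comap _, ?_, ?_⟩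
  · constructor
    constructor
    rintro ⟨x, hx⟩ ⟨y, hy⟩
    have := hC.is_comm.comm ⟨e x, hx⟩ ⟨e y, hy⟩
    apply Subtype.ext
    apply e.injective
    show e (x * y) = e (y * x)
    rw [map_mul, map_mul]
    exact congrArg Subtype.val this
  · rw [Subgroup.index_comap_of_surjective _ e.surjective]
    exact hI

/-- A product of two groups is Jordan iff both factors are; a witness for the product
witnesses each factor, and the product of witnesses witnesses the product. -/
theorem prod_isJordan_iff {G₁ G₂ : Type*} [Group G₁] [Group G₂] :
    (IsJordanGroup (G₁ × G₂) ↔ IsJordanGroup G₁ ∧ IsJordanGroup G₂) ∧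
    (∀ d : ℕ, IsJordanWith (G₁ × G₂) d → IsJordanWith G₁ d ∧ IsJordanWith G₂ d) ∧
    (∀ d₁ d₂ : ℕ, IsJordanWith G₁ d₁ → IsJordanWith G₂ d₂ →
      IsJordanWith (G₁ × G₂) (d₁ * d₂)) := by
  have factor : ∀ d : ℕ, IsJordanWith (G₁ × G₂) d → IsJordanWith G₁ d ∧ IsJordanWith G₂ d := by
    intro d h
    constructor
    · exact isJordanWith_of_injective (f := MonoidHom.inl G₁ G₂)
        (fun a b hab => by simpa [Prod.ext_iff] using hab) h
    · exact isJordanWith_of_injective (f := MonoidHom.inr G₁ G₂)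
        (fun a b hab => by simpa [Prod.ext_iff] using hab) h
  have prod : ∀ d₁ d₂ : ℕ, IsJordanWith G₁ d₁ → IsJordanWith G₂ d₂ →
      IsJordanWith (G₁ × G₂) (d₁ * d₂) := by
    intro d₁ d₂ h₁ h₂ K hK
    set K₁ := K.map (MonoidHom.fst G₁ G₂) with hK₁
    set K₂ := K.map (MonoidHom.snd G₁ G₂) with hK₂
    have f₁ : Finite K₁ := finite_map _ K
    have f₂ : Finite K₂ := finite_map _ K
    obtain ⟨A₁, hN₁, hC₁, hI₁⟩ := h₁ K₁ f₁
    obtain ⟨A₂, hN₂, hC₂, hI₂⟩ := h₂ K₂ f₂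
    -- the natural injection K →* K₁ × K₂
    let φ : K →* K₁ × K₂ :=
      MonoidHom.prod
        (((MonoidHom.fst G₁ G₂).comp K.subtype).codRestrict K₁
          (fun k => ⟨k, k.2, rfl⟩))
        (((MonoidHom.snd G₁ G₂).comp K.subtype).codRestrict K₂
          (fun k => ⟨k, k.2, rfl⟩))
    have hφinj : Function.Injective φ := by
      intro a b hab
      apply Subtype.ext
      have h1 : (a : G₁ × G₂).1 = (b : G₁ × G₂).1 := congrArg Subtype.val (congrArg Prod.fst hab)
      have h2 : (a : G₁ × G₂).2 = (b : G₁ × G₂).2 := congrArg Subtype.val (congrArg Prod.snd hab)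
      exact Prod.ext h1 h2
    haveI := hN₁; haveI := hN₂
    refine ⟨(A₁.prod A₂).comap φ, ((A₁.prod_normal A₂).comap φ), ?_, ?_⟩
    · constructor
      constructor
      rintro ⟨x, hx⟩ ⟨y, hy⟩
      have hcomm : φ x * φ y = φ y * φ x := by
        have c1 := hC₁.is_comm.comm ⟨(φ x).1, hx.1⟩ ⟨(φ y).1, hy.1⟩
        have c2 := hC₂.is_comm.comm ⟨(φ x).2, hx.2⟩ ⟨(φ y).2, hy.2⟩
        rw [Subtype.ext_iff] at c1 c2
        exact Prod.ext c1 c2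
      apply Subtype.ext
      apply hφinj
      show φ (x * y) = φ (y * x)
      rw [map_mul, map_mul, hcomm]
    · rw [Subgroup.index_comap]
      have hdvd : (A₁.prod A₂).relIndex φ.range ∣ (A₁.prod A₂).index :=
        Subgroup.relIndex_dvd_index_of_normal _ _
      have hpos : 0 < (A₁.prod A₂).index := by
        rw [Subgroup.index_prod]
        exact Nat.mul_pos
          (Nat.pos_of_ne_zero A₁.index_ne_zero_of_finite)
          (Nat.pos_of_ne_zero A₂.index_ne_zero_of_finite)
      calc (A₁.prod A₂).relIndex φ.range ≤ (A₁.prod A₂).index := Nat.le_of_dvd hpos hdvd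
        _ = A₁.index * A₂.index := Subgroup.index_prod _ _
        _ ≤ d₁ * d₂ := Nat.mul_le_mul hI₁ hI₂
  refine ⟨⟨fun ⟨d, hd, h⟩ => ⟨⟨d, hd, (factor d h).1⟩, ⟨d, hd, (factor d h).2⟩⟩,
    fun ⟨⟨d₁, hd₁, h₁⟩, ⟨d₂, hd₂, h₂⟩⟩ => ⟨d₁ * d₂, Nat.mul_pos hd₁ hd₂, prod d₁ d₂ h₁ h₂⟩⟩,
    factor, prod⟩
end

section
/- Let H be a normal subgroup of a group G. If both H and the quotient G/H are Jordan groups, then any collection of pairwise nonisomorphic finite simple nonabelian subgroups of G is finite; equivalently, there are only finitely many isomorphism classes of finite simple nonabelian subgroups of G. -/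
/-- Simplicity transfers along a multiplicative equivalence. -/
lemma isSimpleGroup_of_mulEquiv {A B : Type*} [Group A] [Group B] (e : A ≃* B)
    (h : IsSimpleGroup A) : IsSimpleGroup B where
  exists_pair_ne := by
    obtain ⟨x, y, hxy⟩ := h.exists_pair_ne
    exact ⟨e x, e y, fun hc => hxy (e.injective hc)⟩
  eq_bot_or_eq_top_of_normal K hK := by
    have hn : (K.map e.symm.toMonoidHom).Normal := hK.map _ e.symm.surjective
    rcases h.eq_bot_or_eq_top_of_normal _ hn with hb | ht
    · left
      have := Subgroup.map_injective (f := e.symm.toMonoidHom) e.symm.injective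
      apply this
      rw [hb, Subgroup.map_bot]
    · right
      have := Subgroup.map_injective (f := e.symm.toMonoidHom) e.symm.injective
      apply this
      rw [ht, Subgroup.map_top_of_surjective _ e.symm.surjective]

/-- A carrier type with `n` elements and no pre-existing algebraic instances. -/
def BareFin (n : ℕ) : Type := Fin n

instance (n : ℕ) : Finite (BareFin n) := inferInstanceAs (Finite (Fin n))

instance finite_group_bareFin (n : ℕ) : Finite (Group (BareFin n)) :=
  Finite.of_injective (fun g : Group (BareFin n) => (g.mul : BareFin n → BareFin n → BareFin n))
    fun _ _ h => Group.ext h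

/-- In a Jordan group, every finite simple nonabelian subgroup has order at most `d`. -/
lemma card_le_of_jordanWith {G : Type*} [Group G] {d : ℕ}
    (h : IsJordanWith G d) (K : Subgroup G) (hfin : Finite K)
    (hs : IsSimpleGroup K) (hna : ¬ ∀ a b : K, a * b = b * a) :
    Nat.card K ≤ d := by
  obtain ⟨A, hA, hAc, hAi⟩ := h K hfin
  rcases hs.eq_bot_or_eq_top_of_normal A hA with hbot | htop
  · subst hbot
    rwa [Subgroup.index_bot] at hAi
  · exfalso
    apply hna
    intro a b
    subst htop
    exact Subgroup.mul_comm_of_mem_isMulCommutative (⊤ : Subgroup K)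
      (Subgroup.mem_top a) (Subgroup.mem_top b)

/-- If `H` is normal in `G` and both `H` and `G ⧸ H` are Jordan, then any collection of
pairwise nonisomorphic finite simple nonabelian subgroups of `G` is finite. -/
theorem finite_simple_nonabelian_classes {G : Type*} [Group G] (H : Subgroup G) [H.Normal]
    (hH : IsJordanGroup H) (hQ : IsJordanGroup (G ⧸ H))
    (𝒮 : Set (Subgroup G))
    (hS : ∀ S ∈ 𝒮, Finite S ∧ IsSimpleGroup S ∧ ¬ ∀ a b : S, a * b = b * a)
    (hpair : 𝒮.Pairwise fun S T => ¬ Nonempty (S ≃* T)) :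
    𝒮.Finite := by
  classical
  obtain ⟨d₁, hd₁, hJ₁⟩ := hH
  obtain ⟨d₂, hd₂, hJ₂⟩ := hQ
  set N : ℕ := max d₁ d₂ with hN
  -- Step 1: every member of 𝒮 has order at most N.
  have key : ∀ S ∈ 𝒮, Nat.card S ≤ N := by
    intro S hSmem
    obtain ⟨hfin, hsimp, hna⟩ := hS S hSmem
    have hnormal : (H.subgroupOf S).Normal := Subgroup.normal_subgroupOf
    rcases hsimp.eq_bot_or_eq_top_of_normal _ hnormal with hb | ht
    · -- S ∩ H = ⊥ : S embeds into G ⧸ H.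
      have hdisj : Disjoint H S := Subgroup.subgroupOf_eq_bot.mp hb
      set f : S →* G ⧸ H := (QuotientGroup.mk' H).comp S.subtype with hf
      have hinj : Function.Injective f := by
        rw [← MonoidHom.ker_eq_bot_iff]
        ext x
        simp only [Subgroup.mem_bot, MonoidHom.mem_ker, hf, MonoidHom.comp_apply,
          QuotientGroup.mk'_apply, QuotientGroup.eq_one_iff]
        constructor
        · intro hx
          have : (x : G) ∈ H ⊓ S := ⟨hx, x.2⟩
          rw [hdisj.eq_bot] at this
          exact Subtype.ext this
        · rintro rfl
          simpa using H.one_mem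
      have e : S ≃* f.range := MonoidHom.ofInjective hinj
      have hfinR : Finite f.range := Finite.of_surjective _ e.surjective
      have hsimpR : IsSimpleGroup f.range := isSimpleGroup_of_mulEquiv e hsimp
      have hnaR : ¬ ∀ a b : f.range, a * b = b * a := by
        intro hcomm
        apply hna
        intro a b
        have := hcomm (e a) (e b)
        rw [← map_mul, ← map_mul] at this
        exact e.injective this
      have := card_le_of_jordanWith hJ₂ f.range hfinR hsimpR hnaR
      calc Nat.card S = Nat.card f.range := Nat.card_congr e.toEquiv
        _ ≤ d₂ := this
        _ ≤ N := le_max_right _ _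
    · -- S ≤ H
      have hle : S ≤ H := Subgroup.subgroupOf_eq_top.mp ht
      have e : S.subgroupOf H ≃* S := Subgroup.subgroupOfEquivOfLe hle
      have hfinK : Finite (S.subgroupOf H) := Finite.of_injective _ e.injective
      have hsimpK : IsSimpleGroup (S.subgroupOf H) := isSimpleGroup_of_mulEquiv e.symm hsimp
      have hnaK : ¬ ∀ a b : S.subgroupOf H, a * b = b * a := by
        intro hcomm
        apply hna
        intro a b
        have := hcomm (e.symm a) (e.symm b)
        rw [← map_mul, ← map_mul] at this
        exact e.symm.injective this
      have := card_le_of_jordanWith hJ₁ (S.subgroupOf H) hfinK hsimpK hnaK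
      calc Nat.card S = Nat.card (S.subgroupOf H) := (Nat.card_congr e.toEquiv).symm
        _ ≤ d₁ := this
        _ ≤ N := le_max_left _ _
  -- Step 2: for each n, the members of 𝒮 of order n form a finite set.
  have hfib : ∀ n : ℕ, Set.Finite {S | S ∈ 𝒮 ∧ Nat.card S = n} := by
    intro n
    rw [← Set.finite_coe_iff]
    let F : {S | S ∈ 𝒮 ∧ Nat.card S = n} → Group (BareFin n) := fun S =>
      haveI : Finite (S.1 : Subgroup G) := (hS S.1 S.2.1).1
      ((Finite.equivFinOfCardEq S.2.2).symm).group
    apply Finite.of_injective F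
    intro S T h
    by_contra hne
    apply hpair S.2.1 T.2.1 (fun hST => hne (Subtype.ext hST))
    haveI hfS : Finite (S.1 : Subgroup G) := (hS S.1 S.2.1).1
    haveI hfT : Finite (T.1 : Subgroup G) := (hS T.1 T.2.1).1
    set eS : (S.1 : Subgroup G) ≃ BareFin n := Finite.equivFinOfCardEq S.2.2 with heS
    set eT : (T.1 : Subgroup G) ≃ BareFin n := Finite.equivFinOfCardEq T.2.2 with heT
    have hmul : ∀ a b : BareFin n,
        eS (eS.symm a * eS.symm b) = eT (eT.symm a * eT.symm b) := fun a b =>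
      congrFun (congrFun (congrArg
        (fun g : Group (BareFin n) => (letI := g; fun a b : BareFin n => a * b)) h) a) b
    refine ⟨{ toEquiv := eS.trans eT.symm, map_mul' := ?_ }⟩
    intro x y
    have := hmul (eS x) (eS y)
    simp only [Equiv.symm_apply_apply] at this
    show eT.symm (eS (x * y)) = eT.symm (eS x) * eT.symm (eS y)
    rw [this, Equiv.symm_apply_apply]
  -- Step 3: assemble.
  have hsub : 𝒮 ⊆ ⋃ n ∈ Set.Iic N, {S | S ∈ 𝒮 ∧ Nat.card S = n} := by
    intro S hs
    simp only [Set.mem_iUnion, Set.mem_setOf_eq, Set.mem_Iic]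
    exact ⟨Nat.card S, key S hs, hs, rfl⟩
  exact Set.Finite.subset (Set.Finite.biUnion (Set.finite_Iic N) fun n _ => hfib n) hsub
end

section
/- Let σ ∈ Sym_∞ be the transposition exchanging 1 and 2 and fixing all other integers, and let δ ∈ Sym_∞ be the translation δ(i) = i + 1 for all i ∈ ℤ. Then the subgroup N of Sym_∞ generated by σ and δ is not a Jordan group. -/
theorem Equiv.zpow_addRight (a : ℤ) (n : ℤ) :
    (Equiv.addRight a : Equiv.Perm ℤ) ^ n = Equiv.addRight (n • a) := by
  induction n using Int.induction_on with
  | zero => ext; simp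
  | succ k ih =>
    rw [zpow_add_one, ih]; ext x
    simp only [Equiv.Perm.mul_apply, Equiv.coe_addRight, smul_eq_mul]
    ring
  | pred k ih =>
    rw [zpow_sub_one, ih]; ext x
    simp only [Equiv.Perm.mul_apply, Equiv.coe_addRight, Equiv.Perm.inv_def, Equiv.addRight_symm, smul_eq_mul]
    ring

namespace JordanAux

open Equiv Equiv.Perm Subgroup

/-- The group in question. -/
abbrev N : Subgroup (Equiv.Perm ℤ) :=
  Subgroup.closure {Equiv.swap (1 : ℤ) 2, (Equiv.addRight (1 : ℤ) : Equiv.Perm ℤ)}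

lemma swap_adjacent_mem (k : ℤ) : Equiv.swap k (k + 1) ∈ N := by
  have hσ : Equiv.swap (1 : ℤ) 2 ∈ N := subset_closure (Or.inl rfl)
  have hδ : (Equiv.addRight (1 : ℤ) : Equiv.Perm ℤ) ∈ N := subset_closure (Or.inr rfl)
  have hδk : (Equiv.addRight (1 : ℤ) : Equiv.Perm ℤ) ^ (k - 1) ∈ N := zpow_mem hδ _
  have h1 : ((Equiv.addRight (1 : ℤ) : Equiv.Perm ℤ) ^ (k - 1)) 1 = k := by
    simp [Equiv.zpow_addRight]
  have h2 : ((Equiv.addRight (1 : ℤ) : Equiv.Perm ℤ) ^ (k - 1)) 2 = k + 1 := by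
    simp [Equiv.zpow_addRight]; ring
  have key : Equiv.swap k (k + 1)
      = (Equiv.addRight (1 : ℤ) : Equiv.Perm ℤ) ^ (k - 1) * Equiv.swap (1 : ℤ) 2 *
        ((Equiv.addRight (1 : ℤ) : Equiv.Perm ℤ) ^ (k - 1))⁻¹ := by
    rw [← Equiv.swap_apply_apply, h1, h2]
  rw [key]
  exact mul_mem (mul_mem hδk hσ) (inv_mem hδk)

lemma swap_add_mem (m : ℕ) : ∀ i : ℤ, Equiv.swap i (i + 1 + m) ∈ N := by
  induction m with
  | zero => intro i; simpa using swap_adjacent_mem i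
  | succ m ih =>
      intro i
      set j : ℤ := i + 1 + (m : ℤ) with hj
      have hgi : Equiv.swap j (j + 1) i = i :=
        Equiv.swap_apply_of_ne_of_ne (by omega) (by omega)
      have hgj : Equiv.swap j (j + 1) j = j + 1 := Equiv.swap_apply_left _ _
      have harg : i + 1 + ((m : ℤ) + 1) = j + 1 := by omega
      have key : Equiv.swap i (i + 1 + ((m + 1 : ℕ) : ℤ))
          = Equiv.swap j (j + 1) * Equiv.swap i j * (Equiv.swap j (j + 1))⁻¹ := by
        rw [← Equiv.swap_apply_apply, hgi, hgj]
        push_cast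
        rw [harg]
      rw [key]
      exact mul_mem (mul_mem (swap_adjacent_mem j) (ih i)) (inv_mem (swap_adjacent_mem j))

lemma swap_mem (i j : ℤ) : Equiv.swap i j ∈ N := by
  rcases lt_trichotomy i j with h | h | h
  · have hj : j = i + 1 + ((j - i - 1).toNat : ℤ) := by omega
    rw [hj]; exact swap_add_mem _ i
  · subst h
    rw [Equiv.swap_self]
    exact one_mem N
  · have hi : i = j + 1 + ((i - j - 1).toNat : ℤ) := by omega
    rw [Equiv.swap_comm, hi]
    exact swap_add_mem _ j

lemma viaEmbedding_swap {α β : Type*} [DecidableEq α] [DecidableEq β] (ι : α ↪ β) (a b : α) :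
    (Equiv.swap a b).viaEmbedding ι = Equiv.swap (ι a) (ι b) := by
  ext x
  by_cases hx : x ∈ Set.range ι
  · obtain ⟨y, rfl⟩ := hx
    rw [Equiv.Perm.viaEmbedding_apply]
    simp only [Equiv.swap_apply_def, ι.injective.eq_iff]
    split_ifs <;> simp_all
  · rw [Equiv.Perm.viaEmbedding_apply_of_notMem _ _ _ hx,
      Equiv.swap_apply_of_ne_of_ne (fun h => hx ⟨a, h.symm⟩) (fun h => hx ⟨b, h.symm⟩)]

lemma via_mem {α : Type*} [Finite α] [DecidableEq α] (ι : α ↪ ℤ) (p : Equiv.Perm α) :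
    Equiv.Perm.viaEmbeddingHom ι p ∈ N := by
  have hp : p ∈ Subgroup.closure {σ : Equiv.Perm α | σ.IsSwap} := by
    rw [Equiv.Perm.closure_isSwap]; trivial
  refine Subgroup.closure_induction
    (p := fun q _ => Equiv.Perm.viaEmbeddingHom ι q ∈ N) ?_ ?_ ?_ ?_ hp
  · rintro q ⟨a, b, -, rfl⟩
    show Equiv.Perm.viaEmbeddingHom ι (Equiv.swap a b) ∈ N
    rw [Equiv.Perm.viaEmbeddingHom_apply, viaEmbedding_swap]
    exact swap_mem _ _
  · show Equiv.Perm.viaEmbeddingHom ι 1 ∈ N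
    rw [map_one]; exact one_mem N
  · intro x y _ _ hx hy
    show Equiv.Perm.viaEmbeddingHom ι (x * y) ∈ N
    rw [map_mul]; exact mul_mem hx hy
  · intro x _ hx
    show Equiv.Perm.viaEmbeddingHom ι x⁻¹ ∈ N
    rw [map_inv]; exact inv_mem hx

lemma pull {G H : Type*} [Group G] [Group H] [Finite H] {d : ℕ} (hJ : IsJordanWith G d)
    (f : H →* G) (hf : Function.Injective f) :
    ∃ B : Subgroup H, B.Normal ∧ IsMulCommutative B ∧ B.index ≤ d := by
  haveI hfin : Finite f.range :=
    Finite.of_surjective f.rangeRestrict f.rangeRestrict_surjective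
  obtain ⟨A, hAn, hAc, hAi⟩ := hJ f.range hfin
  let e : H ≃* f.range := MonoidHom.ofInjective hf
  refine ⟨A.comap e.toMonoidHom, hAn.comap _, ?_, ?_⟩
  · haveI := hAc
    exact A.comap_injective_isMulCommutative e.injective
  · exact (A.index_comap_of_surjective e.surjective).le.trans hAi

def x5 : Equiv.Perm (Fin 5) := Equiv.swap 0 1 * Equiv.swap 2 3
def y5 : Equiv.Perm (Fin 5) := Equiv.swap 1 2 * Equiv.swap 3 4

lemma x5_mem : x5 ∈ alternatingGroup (Fin 5) := by
  rw [Equiv.Perm.mem_alternatingGroup]; decide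
lemma y5_mem : y5 ∈ alternatingGroup (Fin 5) := by
  rw [Equiv.Perm.mem_alternatingGroup]; decide
lemma xy_ne : x5 * y5 ≠ y5 * x5 := by decide

lemma pi_bot {n : ℕ} (B : Subgroup (∀ _ : Fin n, alternatingGroup (Fin 5)))
    (hn : B.Normal) (hc : IsMulCommutative B) : B = ⊥ := by
  have key : ∀ i, B.map (Pi.evalMonoidHom (fun _ : Fin n => ↥(alternatingGroup (Fin 5))) i) = ⊥ := by
    intro i
    have hsurj : Function.Surjective
        (Pi.evalMonoidHom (fun _ : Fin n => ↥(alternatingGroup (Fin 5))) i) :=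
      fun s => ⟨fun _ => s, rfl⟩
    have hnorm := hn.map _ hsurj
    haveI := hc
    haveI : IsMulCommutative (B.map (Pi.evalMonoidHom (fun _ : Fin n => ↥(alternatingGroup (Fin 5))) i)) :=
      Subgroup.map_isMulCommutative B _
    rcases hnorm.eq_bot_or_eq_top with h | h
    · exact h
    · exfalso
      have hx : (⟨x5, x5_mem⟩ : alternatingGroup (Fin 5)) ∈
          B.map (Pi.evalMonoidHom (fun _ : Fin n => ↥(alternatingGroup (Fin 5))) i) := by
        rw [h]; trivial
      have hy : (⟨y5, y5_mem⟩ : alternatingGroup (Fin 5)) ∈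
          B.map (Pi.evalMonoidHom (fun _ : Fin n => ↥(alternatingGroup (Fin 5))) i) := by
        rw [h]; trivial
      have hcomm := Subgroup.mul_comm_of_mem_isMulCommutative _ hx hy
      exact xy_ne (congrArg Subtype.val hcomm)
  rw [eq_bot_iff]
  intro a ha
  have ha1 : ∀ i, a i = 1 := by
    intro i
    have : a i ∈ (⊥ : Subgroup (alternatingGroup (Fin 5))) := by
      rw [← key i]; exact Subgroup.mem_map_of_mem _ ha
    simpa using this
  have : a = 1 := funext ha1
  simp [this]

end JordanAux

open JordanAux Equiv Equiv.Perm Subgroup in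
/-- The subgroup of `Sym(ℤ)` generated by the transposition `(1 2)` and the translation
`i ↦ i + 1` is not Jordan. -/
theorem not_isJordanGroup_closure_swap_translation :
    ¬ IsJordanGroup
      (Subgroup.closure {Equiv.swap (1 : ℤ) 2, (Equiv.addRight (1 : ℤ) : Equiv.Perm ℤ)}) := by
  rintro ⟨d, hd, hJ⟩
  let ι : (Σ _ : Fin d, Fin 5) ↪ ℤ := by
    refine ⟨fun p => 5 * (p.1 : ℤ) + (p.2 : ℤ), ?_⟩
    rintro ⟨a1, a2⟩ ⟨b1, b2⟩ h
    dsimp only at h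
    have h' : 5 * (a1 : ℕ) + (a2 : ℕ) = 5 * (b1 : ℕ) + (b2 : ℕ) := by exact_mod_cast h
    have ha := a2.isLt
    have hb := b2.isLt
    have e1 : a1 = b1 := Fin.ext (by omega)
    have e2 : (a2 : ℕ) = (b2 : ℕ) := by omega
    subst e1
    have e2' : a2 = b2 := Fin.ext e2
    subst e2'
    rfl
  let toPerm : (∀ _ : Fin d, ↥(alternatingGroup (Fin 5))) →* (∀ _ : Fin d, Equiv.Perm (Fin 5)) :=
    { toFun := fun g i => (g i : Equiv.Perm (Fin 5))
      map_one' := rfl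
      map_mul' := fun a b => rfl }
  let F : (∀ _ : Fin d, ↥(alternatingGroup (Fin 5))) →* Equiv.Perm ℤ :=
    (Equiv.Perm.viaEmbeddingHom ι).comp ((Equiv.Perm.sigmaCongrRightHom _).comp toPerm)
  have hFmem : ∀ g, F g ∈ N := fun g => via_mem ι _
  have hFinj : Function.Injective F := by
    have h3 : Function.Injective toPerm := by
      intro a b h
      funext i
      exact Subtype.ext (congrFun h i)
    have : Function.Injective
        (⇑(Equiv.Perm.viaEmbeddingHom ι) ∘ ⇑(Equiv.Perm.sigmaCongrRightHom
          (fun _ : Fin d => Fin 5)) ∘ ⇑toPerm) :=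
      (Equiv.Perm.viaEmbeddingHom_injective ι).comp
        (Equiv.Perm.sigmaCongrRightHom_injective.comp h3)
    exact this
  let f := F.codRestrict N hFmem
  have hfinj : Function.Injective f := fun a b h => hFinj (congrArg Subtype.val h)
  obtain ⟨B, hBn, hBc, hBi⟩ := pull hJ f hfinj
  have hB := pi_bot B hBn hBc
  rw [hB, Subgroup.index_bot] at hBi
  have h60 : Nat.card ↥(alternatingGroup (Fin 5)) = 60 := by
    have h2 := two_mul_card_alternatingGroup (α := Fin 5)
    have hp : Fintype.card (Equiv.Perm (Fin 5)) = 120 := by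
      rw [Fintype.card_perm]; norm_num [Nat.factorial]
    rw [Nat.card_eq_fintype_card]
    omega
  have hcard : Nat.card (∀ _ : Fin d, ↥(alternatingGroup (Fin 5))) = 60 ^ d := by
    simp only [Nat.card_pi, h60, Finset.prod_const, Finset.card_univ, Fintype.card_fin]
  rw [hcard] at hBi
  have hlt : d < 60 ^ d :=
    lt_of_lt_of_le (Nat.lt_two_pow_self (n := d)) (Nat.pow_le_pow_left (by norm_num) d)
  omega
end

section
/- Let H be a finite normal subgroup of a group G such that the center of H is trivial. If G/H is Jordan, then G is Jordan; moreover, if every finite subgroup of G/H contains an abelian normal subgroup of index at most j, and a = |Aut(H)| is the order of the automorphism group of H, then every finite subgroup F of G contains an abelian subgroup normal in F of index at most a · j^a. In particular J_G ≤ |Aut(H)| · (J_{G/H})^{|Aut(H)|}. -/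
set_option maxHeartbeats 1000000


/-- If `H` is a finite normal subgroup of `G` with trivial center and `G ⧸ H` is Jordan
with witness `j`, then `G` is Jordan with witness `a * j ^ a`, where `a = |Aut H|`. -/
theorem isJordanGroup_of_quotient_by_centerless {G : Type*} [Group G] (H : Subgroup G)
    [H.Normal] [Finite H] (hcenter : Subgroup.center H = ⊥)
    (j : ℕ) (hj : 0 < j) (hQ : IsJordanWith (G ⧸ H) j) :
    IsJordanGroup G ∧
    IsJordanWith G (Nat.card (MulAut H) * j ^ Nat.card (MulAut H)) := by
  set a := Nat.card (MulAut H) with ha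
  have ha0 : 0 < a := Nat.card_pos
  have key : IsJordanWith G (a * j ^ a) := by
    intro K hK
    -- the conjugation action of K on H
    let φ : K →* MulAut H := MulAut.conjNormal.comp K.subtype
    let C : Subgroup K := φ.ker
    have hCnormal : C.Normal := φ.normal_ker
    have hCindex : C.index ≤ a := by
      rw [show C = φ.ker from rfl, Subgroup.index_ker]
      exact Subgroup.card_le_card_group _
    -- C injects into G ⧸ H
    let χ : C →* G ⧸ H := ((QuotientGroup.mk' H).comp K.subtype).comp C.subtype
    have hχ : Function.Injective χ := by
      rw [← MonoidHom.ker_eq_bot_iff]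
      rw [Subgroup.eq_bot_iff_forall]
      intro x hx
      have hxH : ((x : K) : G) ∈ H := by
        have : χ x = 1 := hx
        simpa [χ, QuotientGroup.eq_one_iff] using this
      have hxC : (x : K) ∈ C := x.2
      have hconj : ∀ y : H, ((x : K) : G) * (y : G) * ((x : K) : G)⁻¹ = (y : G) := by
        intro y
        have h1 : φ (x : K) = 1 := MonoidHom.mem_ker.mp hxC
        have h2 := congrArg (fun (e : MulAut H) => ((e y : H) : G)) h1
        simpa [φ, MulAut.conjNormal_apply] using h2
      have hmem : (⟨((x : K) : G), hxH⟩ : H) ∈ Subgroup.center H := by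
        rw [Subgroup.mem_center_iff]
        intro g
        have hg := hconj g
        rw [mul_inv_eq_iff_eq_mul] at hg
        exact Subtype.ext (by simpa using hg.symm)
      rw [hcenter, Subgroup.mem_bot] at hmem
      have : ((x : K) : G) = 1 := congrArg Subtype.val hmem
      ext
      exact this
    -- the image of C in G ⧸ H is a finite subgroup
    have hCfin : Finite C := inferInstance
    have hRfin : Finite χ.range := Finite.of_surjective χ.rangeRestrict
      χ.rangeRestrict_surjective
    obtain ⟨A', hA'norm, hA'comm, hA'idx⟩ := hQ χ.range hRfin
    let e : C ≃* χ.range := MonoidHom.ofInjective hχ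
    let A₁ : Subgroup C := A'.comap e.toMonoidHom
    have hA₁norm : A₁.Normal := hA'norm.comap e.toMonoidHom
    have hA₁idx : A₁.index ≤ j := by
      have he := Subgroup.index_comap_of_surjective (H := A') (f := e.toMonoidHom) e.surjective
      rw [show A₁ = A'.comap e.toMonoidHom from rfl, he]
      exact hA'idx
    let A₂ : Subgroup K := A₁.map C.subtype
    have hA₂C : A₂ ≤ C := Subgroup.map_subtype_le A₁
    have hA₂comm : ∀ x ∈ A₂, ∀ y ∈ A₂, x * y = y * x := by
      rintro _ ⟨x₁, hx₁, rfl⟩ _ ⟨y₁, hy₁, rfl⟩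
      have hxy : x₁ * y₁ = y₁ * x₁ := by
        apply e.injective
        have hex : e x₁ ∈ A' := hx₁
        have hey : e y₁ ∈ A' := hy₁
        have hcm : (⟨e x₁, hex⟩ : A') * ⟨e y₁, hey⟩ = ⟨e y₁, hey⟩ * ⟨e x₁, hex⟩ :=
          hA'comm.is_comm.comm _ _
        have h2 : (e x₁ : χ.range) * e y₁ = e y₁ * e x₁ := congrArg Subtype.val hcm
        rw [map_mul, map_mul]
        exact h2
      rw [← map_mul, ← map_mul, hxy]
    have hA₂inv : ∀ c ∈ C, ∀ x ∈ A₂, c * x * c⁻¹ ∈ A₂ := by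
      rintro c hc _ ⟨x₁, hx₁, rfl⟩
      refine ⟨⟨c, hc⟩ * x₁ * ⟨c, hc⟩⁻¹, hA₁norm.conj_mem x₁ hx₁ ⟨c, hc⟩, rfl⟩
    -- the conjugates of A₂
    let g : K → Subgroup K := fun k => A₂.comap (MulAut.conj k).toMonoidHom
    have hgmem : ∀ k x : K, x ∈ g k ↔ k * x * k⁻¹ ∈ A₂ := by
      intro k x; rfl
    have hgC : ∀ k : K, g k ≤ C := by
      intro k x hx
      rw [hgmem] at hx
      have := hA₂C hx
      have h2 : k⁻¹ * (k * x * k⁻¹) * k⁻¹⁻¹ ∈ C := hCnormal.conj_mem _ this k⁻¹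
      simpa [mul_assoc] using h2
    have hgcoset : ∀ k₁ k₂ : K, k₁⁻¹ * k₂ ∈ C → g k₁ = g k₂ := by
      intro k₁ k₂ hc
      have hc' : k₁ * (k₁⁻¹ * k₂) * k₁⁻¹ ∈ C := hCnormal.conj_mem _ hc k₁
      set c' : K := k₁ * (k₁⁻¹ * k₂) * k₁⁻¹ with hc'def
      have hk₂ : k₂ = c' * k₁ := by rw [hc'def]; group
      ext x
      rw [hgmem, hgmem, hk₂]
      have hrw : c' * k₁ * x * (c' * k₁)⁻¹ = c' * (k₁ * x * k₁⁻¹) * c'⁻¹ := by group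
      rw [hrw]
      constructor
      · intro hmem
        exact hA₂inv c' hc' _ hmem
      · intro hmem
        have h2 : c'⁻¹ * (c' * (k₁ * x * k₁⁻¹) * c'⁻¹) * c'⁻¹⁻¹ ∈ A₂ :=
          hA₂inv c'⁻¹ (inv_mem hc') _ hmem
        have h3 : c'⁻¹ * (c' * (k₁ * x * k₁⁻¹) * c'⁻¹) * c'⁻¹⁻¹ = k₁ * x * k₁⁻¹ := by group
        rwa [h3] at h2
    have : Fintype (K ⧸ C) := Fintype.ofFinite _
    let B : Subgroup K := ⨅ q : K ⧸ C, g q.out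
    have hBmem : ∀ x : K, x ∈ B ↔ ∀ k : K, k * x * k⁻¹ ∈ A₂ := by
      intro x
      rw [show B = ⨅ q : K ⧸ C, g q.out from rfl, Subgroup.mem_iInf]
      constructor
      · intro hx k
        have hout : ((QuotientGroup.mk k : K ⧸ C)).out⁻¹ * k ∈ C := by
          rw [← QuotientGroup.eq]
          exact QuotientGroup.out_eq' _
        rw [← hgmem, ← hgcoset _ _ hout]
        exact hx _
      · intro hx q
        rw [hgmem]
        exact hx _
    have hBA₂ : B ≤ A₂ := by
      intro x hx
      have := (hBmem x).mp hx 1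
      simpa using this
    have hBC : B ≤ C := le_trans hBA₂ hA₂C
    refine ⟨B, ?_, ?_, ?_⟩
    · constructor
      intro n hn k
      rw [hBmem] at hn ⊢
      intro k'
      have := hn (k' * k)
      have hrw : k' * (k * n * k⁻¹) * k'⁻¹ = (k' * k) * n * (k' * k)⁻¹ := by group
      rw [hrw]
      exact this
    · refine ⟨⟨fun x y => Subtype.ext ?_⟩⟩
      exact hA₂comm _ (hBA₂ x.2) _ (hBA₂ y.2)
    · have h1 : B.relIndex C * C.index = B.index := Subgroup.relIndex_mul_index hBC
      have hgrel : ∀ k : K, (g k).relIndex C = A₁.index := by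
        intro k
        have hmapC : C.map (MulAut.conj k).toMonoidHom = C := by
          ext x
          simp only [Subgroup.mem_map]
          constructor
          · rintro ⟨c, hc, rfl⟩
            exact hCnormal.conj_mem _ hc k
          · intro hx
            refine ⟨k⁻¹ * x * k⁻¹⁻¹, hCnormal.conj_mem _ hx k⁻¹, ?_⟩
            simp [MulAut.conj_apply]
            group
        rw [show g k = A₂.comap (MulAut.conj k).toMonoidHom from rfl,
          Subgroup.relIndex_comap, hmapC]
        have : A₂.subgroupOf C = A₁ :=
          Subgroup.comap_map_eq_self_of_injective C.subtype_injective A₁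
        rw [Subgroup.relIndex, this]
      have h2 : B.relIndex C ≤ j ^ a := by
        calc B.relIndex C ≤ ∏ q : K ⧸ C, (g q.out).relIndex C :=
              Subgroup.relIndex_iInf_le _
          _ = ∏ _q : K ⧸ C, A₁.index := by
              exact Finset.prod_congr rfl fun q _ => hgrel q.out
          _ ≤ ∏ _q : K ⧸ C, j := Finset.prod_le_prod' fun q _ => hA₁idx
          _ = j ^ Fintype.card (K ⧸ C) := by
              rw [Finset.prod_const, Finset.card_univ]
          _ ≤ j ^ a := by
              apply Nat.pow_le_pow_right hj
              have : Fintype.card (K ⧸ C) = C.index := by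
                rw [Subgroup.index, Nat.card_eq_fintype_card]
              rw [this]
              exact hCindex
      calc B.index = B.relIndex C * C.index := h1.symm
        _ ≤ j ^ a * a := Nat.mul_le_mul h2 hCindex
        _ = a * j ^ a := Nat.mul_comm _ _
  exact ⟨⟨a * j ^ a, Nat.mul_pos ha0 (pow_pos hj a), key⟩, key⟩
end

section
/- Let k be a field of characteristic zero, let R be a commutative Noetherian local k-algebra with maximal ideal m such that the composition k → R → R/m is an isomorphism (so R has residue field k), and let G be a finite group of k-algebra automorphisms of R. Then the induced linear action of G on the k-vector space m/m² is faithful: if g ∈ G induces the identity map on m/m², then g is the identity automorphism of R. -/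
open IsLocalRing Finset

section Aux

variable {k R : Type*} [Field k] [CommRing R] [IsLocalRing R] [Algebra k R]
  (g : R ≃ₐ[k] R)

private lemma aux_maps_maximal (b : R) (hb : b ∈ maximalIdeal R) :
    g b ∈ maximalIdeal R := by
  rw [mem_maximalIdeal] at hb ⊢
  intro hu
  exact hb (by simpa using hu.map g.symm)

/-- If `g x - x ∈ m^(c+2)` for all `x ∈ m`, then for `y ∈ m^(j+1)` we get
`g y - y ∈ m^(j+c+2)`. -/
private lemma aux_pow (c : ℕ) (h : ∀ x ∈ maximalIdeal R, g x - x ∈ (maximalIdeal R) ^ (c + 2)) :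
    ∀ j : ℕ, ∀ y ∈ (maximalIdeal R) ^ (j + 1), g y - y ∈ (maximalIdeal R) ^ (j + c + 2) := by
  intro j
  induction j with
  | zero =>
    intro y hy
    simpa using h y (by simpa using hy)
  | succ j ih =>
    intro y hy
    rw [pow_succ] at hy
    refine Submodule.mul_induction_on hy ?_ ?_
    · intro a ha b hb
      have key : g (a * b) - a * b = (g a - a) * g b + a * (g b - b) := by
        rw [map_mul]; ring
      rw [key]
      refine Ideal.add_mem _ ?_ ?_
      · have h1 : (g a - a) * g b ∈ (maximalIdeal R) ^ (j + c + 2) * maximalIdeal R :=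
          Ideal.mul_mem_mul (ih a ha) (aux_maps_maximal g b hb)
        rw [← pow_succ] at h1
        have e : j + 1 + c + 2 = j + c + 2 + 1 := by ring
        rw [e]
        exact h1
      · have h2 : a * (g b - b) ∈ (maximalIdeal R) ^ (j + 1) * (maximalIdeal R) ^ (c + 2) :=
          Ideal.mul_mem_mul ha (h b hb)
        rw [← pow_add] at h2
        refine Ideal.pow_le_pow_right (by omega) h2
    · intro y z hy hz
      have : g (y + z) - (y + z) = (g y - y) + (g z - z) := by
        rw [map_add]; ring
      rw [this]
      exact Ideal.add_mem _ hy hz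

/-- Iterates of `D = g - 1` on elements of `m`. -/
private lemma aux_iter (c : ℕ) (h : ∀ x ∈ maximalIdeal R, g x - x ∈ (maximalIdeal R) ^ (c + 2))
    (x : R) (hx : x ∈ maximalIdeal R) :
    ∀ t : ℕ, ((g.toLinearMap - 1 : Module.End k R) ^ (t + 1)) x ∈
      (maximalIdeal R) ^ ((t + 1) * (c + 1) + 1) := by
  intro t
  induction t with
  | zero =>
    have : ((g.toLinearMap - 1 : Module.End k R) ^ 1) x = g x - x := by
      simp [LinearMap.sub_apply]
    rw [this]
    have := h x hx
    refine Ideal.pow_le_pow_right (by omega) this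
  | succ t ih =>
    set y := ((g.toLinearMap - 1 : Module.End k R) ^ (t + 1)) x with hy
    have hstep : ((g.toLinearMap - 1 : Module.End k R) ^ (t + 2)) x = g y - y := by
      rw [pow_succ']
      simp [LinearMap.sub_apply, hy, Module.End.mul_apply]
    rw [hstep]
    have hmem : y ∈ (maximalIdeal R) ^ ((t + 1) * (c + 1) + 1) := ih
    have := aux_pow g c h ((t + 1) * (c + 1)) y hmem
    refine Ideal.pow_le_pow_right (by ring_nf; omega) this

end Aux

/-- Let `k` be a field of characteristic zero, `R` a commutative Noetherian local
`k`-algebra with residue field `k` (i.e. `k → R/m` is an isomorphism), and `G` a finite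
group of `k`-algebra automorphisms of `R`.  If `g ∈ G` induces the identity on the
cotangent space `m/m²` (i.e. `g x - x ∈ m²` for all `x ∈ m`), then `g` is the identity. -/
theorem faithful_on_cotangent {k R : Type*} [Field k] [CharZero k] [CommRing R]
    [IsNoetherianRing R] [IsLocalRing R] [Algebra k R]
    (hres : Function.Bijective (algebraMap k (IsLocalRing.ResidueField R)))
    (G : Subgroup (R ≃ₐ[k] R)) [Finite G] (g : R ≃ₐ[k] R) (hg : g ∈ G)
    (hid : ∀ x ∈ IsLocalRing.maximalIdeal R, g x - x ∈ (IsLocalRing.maximalIdeal R) ^ 2) :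
    g = 1 := by
  classical
  -- a positive exponent `n ≥ 2` with `g ^ n = 1`
  set n : ℕ := 2 * Nat.card G with hn
  have hn2 : 2 ≤ n := by
    have : 0 < Nat.card G := Nat.card_pos
    omega
  have hgn : g ^ n = 1 := by
    have h1 : (⟨g, hg⟩ : G) ^ n = 1 := by
      rw [hn, pow_mul, pow_card_eq_one']
    have := congrArg (Subtype.val) h1
    simpa using this
  -- the linear endomorphism D = g - 1
  set L : Module.End k R := g.toLinearMap with hL
  set D : Module.End k R := L - 1 with hD
  have hLn : L ^ n = 1 := by
    have : ∀ m : ℕ, (g ^ m).toLinearMap = L ^ m := by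
      intro m
      induction m with
      | zero => rfl
      | succ m ih =>
        rw [pow_succ, pow_succ, ← ih]
        rfl
    rw [← this, hgn]
    rfl
  -- n is a unit in R
  have hnu : IsUnit (n : R) := by
    have hk : IsUnit (n : k) := by
      have : (n : k) ≠ 0 := Nat.cast_ne_zero.mpr (by omega)
      exact isUnit_iff_ne_zero.mpr this
    have := hk.map (algebraMap k R)
    simpa using this
  -- main induction: g x - x ∈ m ^ (c + 2) for all c
  have main : ∀ c : ℕ, ∀ x ∈ IsLocalRing.maximalIdeal R,
      g x - x ∈ (IsLocalRing.maximalIdeal R) ^ (c + 2) := by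
    intro c
    induction c with
    | zero => simpa using hid
    | succ c ih =>
      intro x hx
      -- binomial expansion of L^n = (1 + D)^n
      have hbin : (L ^ n : Module.End k R) =
          ∑ t ∈ Finset.range (n + 1), (n.choose t : Module.End k R) * D ^ t := by
        have hc : Commute D (1 : Module.End k R) := Commute.one_right D
        have h1 : L = D + 1 := by rw [hD]; abel
        rw [h1, hc.add_pow]
        refine Finset.sum_congr rfl ?_
        intro t ht
        rw [one_pow, mul_one]
        exact ((Nat.cast_commute (n.choose t) (D ^ t)).symm).eq
      -- evaluate at x
      have hev : x = ∑ t ∈ Finset.range (n + 1), (n.choose t : ℕ) • ((D ^ t) x) := by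
        have h0 : (L ^ n) x = x := by rw [hLn]; simp
        calc x = (L ^ n) x := h0.symm
          _ = (∑ t ∈ Finset.range (n + 1), (n.choose t : Module.End k R) * D ^ t) x := by
              rw [hbin]
          _ = ∑ t ∈ Finset.range (n + 1), ((n.choose t : Module.End k R) * D ^ t) x := by
              rw [LinearMap.sum_apply]
          _ = ∑ t ∈ Finset.range (n + 1), (n.choose t : ℕ) • ((D ^ t) x) := by
              refine Finset.sum_congr rfl ?_
              intro t ht
              rw [Module.End.mul_apply, Module.End.natCast_apply]
      -- split the sum
      obtain ⟨s, hs⟩ : ∃ s, n = s + 2 := ⟨n - 2, by omega⟩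
      rw [hs] at hev
      rw [Finset.sum_range_succ'] at hev
      rw [Finset.sum_range_succ'] at hev
      simp only [pow_zero, Module.End.one_apply, Nat.choose_zero_right, one_smul,
        Nat.choose_one_right, zero_add, pow_one] at hev
      -- hev : x = (∑ j in range (s+1), choose • D^(j+2) x) + (s+2) • D x + x  (roughly)
      -- deduce n • D x ∈ m^(c+3)
      have hDx : D x = g x - x := by simp [hD, hL, LinearMap.sub_apply]
      have hterm : ∀ j ∈ Finset.range (s + 1),
          ((s+2).choose (j + 1 + 1) : ℕ) • ((D ^ (j + 1 + 1)) x) ∈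
            (IsLocalRing.maximalIdeal R) ^ (c + 3) := by
        intro j _
        have hiter := aux_iter g c ih x hx (j + 1)
        have hle : (IsLocalRing.maximalIdeal R) ^ ((j + 1 + 1) * (c + 1) + 1) ≤
            (IsLocalRing.maximalIdeal R) ^ (c + 3) := by
          refine Ideal.pow_le_pow_right ?_
          nlinarith
        exact nsmul_mem (hle hiter) _
      have hsum : ∑ j ∈ Finset.range (s + 1),
          ((s+2).choose (j + 1 + 1) : ℕ) • ((D ^ (j + 1 + 1)) x) ∈
            (IsLocalRing.maximalIdeal R) ^ (c + 3) :=
        Submodule.sum_mem _ hterm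
      have hnD : (n : ℕ) • (D x) ∈ (IsLocalRing.maximalIdeal R) ^ (c + 3) := by
        have heq : (n : ℕ) • (D x) =
            - ∑ j ∈ Finset.range (s + 1), ((s+2).choose (j + 1 + 1) : ℕ) • ((D ^ (j + 1 + 1)) x) := by
          rw [hs]
          linear_combination (norm := abel) -hev
        rw [heq]
        exact neg_mem hsum
      -- divide by n
      obtain ⟨u, hu⟩ := hnu
      have hfinal : D x ∈ (IsLocalRing.maximalIdeal R) ^ (c + 3) := by
        have hmul : (n : R) * D x ∈ (IsLocalRing.maximalIdeal R) ^ (c + 3) := by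
          rwa [← nsmul_eq_mul]
        have : D x = ↑u⁻¹ * ((n : R) * D x) := by
          rw [← mul_assoc, ← hu, Units.inv_mul, one_mul]
        rw [this]
        exact Ideal.mul_mem_left _ _ hmul
      rw [← hDx]
      have : c + 1 + 2 = c + 3 := by omega
      rw [this]
      exact hfinal
  -- Krull intersection: g x = x for x ∈ m
  have hfix : ∀ x ∈ IsLocalRing.maximalIdeal R, g x = x := by
    intro x hx
    have hmem : g x - x ∈ ⨅ i : ℕ, (IsLocalRing.maximalIdeal R) ^ i := by
      rw [Submodule.mem_iInf]
      intro i
      rcases i with _ | _ | i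
      · simp
      · exact Ideal.pow_le_pow_right (by omega) (main 0 x hx)
      · exact main i x hx
    rw [Ideal.iInf_pow_eq_bot_of_isLocalRing _
      ((IsLocalRing.maximalIdeal.isMaximal R).ne_top)] at hmem
    have : g x - x = 0 := hmem
    exact sub_eq_zero.mp this
  -- conclude: g = 1
  ext r
  obtain ⟨c, hc⟩ := hres.2 (IsLocalRing.residue R r)
  have hrc : r - algebraMap k R c ∈ IsLocalRing.maximalIdeal R := by
    have h1 : IsLocalRing.residue R (algebraMap k R c) = algebraMap k (IsLocalRing.ResidueField R) c := rfl
    have : IsLocalRing.residue R (r - algebraMap k R c) = 0 := by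
      rw [map_sub, h1, hc, sub_self]
    rwa [← Ideal.Quotient.eq_zero_iff_mem]
  have := hfix _ hrc
  have hcfix : g (algebraMap k R c) = algebraMap k R c := g.commutes c
  have : g r = r := by
    have hsplit : r = algebraMap k R c + (r - algebraMap k R c) := by ring
    calc g r = g (algebraMap k R c + (r - algebraMap k R c)) := by rw [← hsplit]
      _ = g (algebraMap k R c) + g (r - algebraMap k R c) := map_add _ _ _
      _ = algebraMap k R c + (r - algebraMap k R c) := by rw [hcfix, this]
      _ = r := by ring
  simpa using this
end
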